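/- Let H be a 4-uniform hypergraph with balanced bipartition A ∪ B, |A| = |B| = n, minimizing |H(A,A,B,B)| over balanced bipartitions, with δ₃(H) ≥ n−1. Fix ε > 0 and suppose n is sufficiently large. If there exists a vertex b ∈ B with l_b^{ABB} ≤ (ε/2)n³ (an anarchist-like vertex), then every vertex a ∈ A satisfies l_a^{ABB} ≤ (3/2)ε·n³ (i.e., is 3ε-typical up to normalization). -/

import Mathlib

open Finset

/-- Number of triples of link type (i vertices in A, j vertices in B) in the link of `v`. -/
def linkCount {V : Type} [Fintype V] [DecidableEq V] (H : Finset (Finset V)) (v : V)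
    (A B : Finset V) (i j : ℕ) : ℕ :=
  (((Finset.univ : Finset V).powersetCard 3).filter
    (fun T => v ∉ T ∧ (T ∩ A).card = i ∧ (T ∩ B).card = j ∧ insert v T ∈ H)).card

lemma linkCount_eq {V : Type} [Fintype V] [DecidableEq V] (H : Finset (Finset V))
    (H4 : ∀ e ∈ H, e.card = 4) (v : V) (A B : Finset V) (i j : ℕ) :
    linkCount H v A B i j =
      (H.filter fun e => v ∈ e ∧ ((e.erase v) ∩ A).card = i ∧ ((e.erase v) ∩ B).card = j).card := by
  unfold linkCount
  apply Finset.card_bij (fun T _ => insert v T)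
  · intro T hT
    simp only [mem_filter, mem_powersetCard] at hT
    obtain ⟨⟨_, hT3⟩, hv, hA, hB, hH⟩ := hT
    simp only [mem_filter]
    refine ⟨hH, mem_insert_self _ _, ?_, ?_⟩ <;> rw [erase_insert hv] <;> assumption
  · intro T1 h1 T2 h2 h
    simp only [mem_filter, mem_powersetCard] at h1 h2
    rw [← erase_insert h1.2.1, ← erase_insert h2.2.1, h]
  · intro e he
    simp only [mem_filter] at he
    obtain ⟨heH, hv, hA, hB⟩ := he
    refine ⟨e.erase v, ?_, ?_⟩
    · simp only [mem_filter, mem_powersetCard]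
      refine ⟨⟨subset_univ _, ?_⟩, notMem_erase _ _, hA, hB, ?_⟩
      · rw [card_erase_of_mem hv, H4 e heH]
      · rw [insert_erase hv]; exact heH
    · rw [insert_erase hv]

lemma interAB_card {V : Type} [Fintype V] [DecidableEq V] {A B : Finset V}
    (hAB : Disjoint A B) (hU : A ∪ B = Finset.univ) (e : Finset V) :
    (e ∩ A).card + (e ∩ B).card = e.card := by
  rw [← card_union_of_disjoint (hAB.mono inter_subset_right inter_subset_right),
    ← inter_union_distrib_left, hU, inter_univ]

lemma crude_upper {V : Type} [Fintype V] [DecidableEq V] (H : Finset (Finset V)) (v : V)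
    (A B : Finset V) (hU : A ∪ B = Finset.univ) :
    linkCount H v A B 2 1 ≤ A.card.choose 2 * B.card := by
  unfold linkCount
  have key : ∀ T : Finset V, T = (T ∩ A) ∪ (T ∩ B) := by
    intro T; rw [← inter_union_distrib_left, hU, inter_univ]
  calc _ ≤ (A.powersetCard 2 ×ˢ B.powersetCard 1).card := by
        apply card_le_card_of_injOn (fun T => (T ∩ A, T ∩ B))
        · intro T hT
          simp only [mem_coe, mem_filter] at hT
          simp only [mem_coe, mem_product, mem_powersetCard]
          exact ⟨⟨inter_subset_right, hT.2.2.1⟩, ⟨inter_subset_right, hT.2.2.2.1⟩⟩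
        · intro T1 _ T2 _ h
          simp only [Prod.mk.injEq] at h
          rw [key T1, key T2, h.1, h.2]
      _ = A.card.choose 2 * B.card := by
        rw [card_product, card_powersetCard, card_powersetCard, Nat.choose_one_right]

lemma D_upper {V : Type} [Fintype V] [DecidableEq V] (H : Finset (Finset V))
    (H4 : ∀ e ∈ H, e.card = 4) (a b : V) (hab : a ≠ b) :
    (H.filter fun e => a ∈ e ∧ b ∈ e).card ≤ (Fintype.card V).choose 2 := by
  have : (H.filter fun e => a ∈ e ∧ b ∈ e).card ≤ ((Finset.univ : Finset V).powersetCard 2).card := by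
    apply card_le_card_of_injOn (fun e => (e.erase a).erase b)
    · intro e he
      simp only [mem_coe, mem_filter] at he
      simp only [mem_coe, mem_powersetCard]
      refine ⟨subset_univ _, ?_⟩
      rw [card_erase_of_mem (mem_erase.2 ⟨hab.symm, he.2.2⟩), card_erase_of_mem he.2.1,
        H4 e he.1]
    · intro e1 h1 e2 h2 h
      simp only [coe_filter, Set.mem_setOf_eq] at h1 h2
      have k1 : e1 = insert a (insert b ((e1.erase a).erase b)) := by
        rw [insert_erase (mem_erase.2 ⟨hab.symm, h1.2.2⟩), insert_erase h1.2.1]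
      have k2 : e2 = insert a (insert b ((e2.erase a).erase b)) := by
        rw [insert_erase (mem_erase.2 ⟨hab.symm, h2.2.2⟩), insert_erase h2.2.1]
      rw [k1, k2]; simp only [] at h; rw [h]
  simpa [card_powersetCard] using this

lemma deg_lower {V : Type} [Fintype V] [DecidableEq V] {A B : Finset V} {H : Finset (Finset V)} {n : ℕ}
    (hAB : Disjoint A B) (hU : A ∪ B = Finset.univ) (hA : A.card = n) (hB : B.card = n)
    (H4 : ∀ e ∈ H, e.card = 4)
    (hdeg : ∀ S : Finset V, S.card = 3 →
      (n : ℝ) - 1 ≤ ((Finset.univ.filter (fun x => x ∉ S ∧ insert x S ∈ H)).card : ℝ))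
    (hn : 1 ≤ n) {b : V} (hb : b ∈ B) :
    (n : ℝ) * ((n:ℝ) - 1) * ((n:ℝ) - 1) ≤
      2 * ((linkCount H b A B 2 1 : ℝ) + (linkCount H b A B 1 2 : ℝ)) := by
  classical
  have hbA : b ∉ A := fun h => (Finset.disjoint_left.1 hAB) h hb
  set 𝒮 : Finset (Finset V) := ((Finset.univ : Finset V).powersetCard 3).filter
    (fun S => b ∈ S ∧ (S ∩ A).card = 1 ∧ (S ∩ B).card = 2) with h𝒮def
  -- Step 1 : n (n-1) ≤ |𝒮|
  have hScard : n * (n - 1) ≤ 𝒮.card := by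
    have := card_le_card_of_injOn (s := A ×ˢ (B.erase b))
      (f := fun p => insert b (insert p.1 {p.2})) (t := 𝒮) ?_ ?_
    · calc n * (n-1) = (A ×ˢ (B.erase b)).card := by
            rw [card_product, hA, card_erase_of_mem hb, hB]
          _ ≤ 𝒮.card := this
    · rintro ⟨x, y⟩ hp
      simp only [mem_coe, mem_product, mem_erase] at hp
      obtain ⟨hxA, hyb, hyB⟩ := hp
      have hxB : x ∉ B := fun h => (Finset.disjoint_left.1 hAB) hxA h
      have hbx : b ≠ x := fun h => hbA (h ▸ hxA)
      have hby : b ≠ y := fun h => hyb h.symm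
      have hxy : x ≠ y := fun h => hxB (h ▸ hyB)
      have hiA : insert b (insert x {y}) ∩ A = {x} := by
        rw [insert_inter_of_notMem hbA, insert_inter_of_mem hxA,
          singleton_inter_of_notMem (fun h => (Finset.disjoint_left.1 hAB) h hyB)]
        simp
      have hiB : insert b (insert x {y}) ∩ B = insert b {y} := by
        rw [insert_inter_of_mem hb, insert_inter_of_notMem hxB,
          singleton_inter_of_mem hyB]
      simp only [mem_coe, h𝒮def, mem_filter, mem_powersetCard]
      refine ⟨⟨subset_univ _, ?_⟩, mem_insert_self _ _, by rw [hiA]; simp, by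
        rw [hiB, card_insert_of_notMem (by simp [hby]), card_singleton]⟩
      rw [card_insert_of_notMem (by simp [hbx, hby]),
        card_insert_of_notMem (by simp [hxy]), card_singleton]
    · rintro ⟨x, y⟩ hp ⟨x', y'⟩ hp' h
      simp only [coe_product, Set.mem_prod, mem_coe, mem_erase] at hp hp'
      obtain ⟨hxA, hyb, hyB⟩ := hp
      obtain ⟨hxA', hyb', hyB'⟩ := hp'
      have hxB : x ∉ B := fun hh => (Finset.disjoint_left.1 hAB) hxA hh
      have hxB' : x' ∉ B := fun hh => (Finset.disjoint_left.1 hAB) hxA' hh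
      simp only at h
      have hiA : insert b (insert x {y}) ∩ A = {x} := by
        rw [insert_inter_of_notMem hbA, insert_inter_of_mem hxA,
          singleton_inter_of_notMem (fun hh => (Finset.disjoint_left.1 hAB) hh hyB)]
        simp
      have hiA' : insert b (insert x' {y'}) ∩ A = {x'} := by
        rw [insert_inter_of_notMem hbA, insert_inter_of_mem hxA',
          singleton_inter_of_notMem (fun hh => (Finset.disjoint_left.1 hAB) hh hyB')]
        simp
      have hx : x = x' := by
        have h1 : ({x} : Finset V) = {x'} := by rw [← hiA, h, hiA']
        exact Finset.singleton_inj.1 h1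
      have hiB : insert b (insert x {y}) ∩ B = insert b {y} := by
        rw [insert_inter_of_mem hb, insert_inter_of_notMem hxB, singleton_inter_of_mem hyB]
      have hiB' : insert b (insert x' {y'}) ∩ B = insert b {y'} := by
        rw [insert_inter_of_mem hb, insert_inter_of_notMem hxB', singleton_inter_of_mem hyB']
      have hy : y = y' := by
        have h2 : (insert b ({y} : Finset V)) = insert b ({y'} : Finset V) := by rw [← hiB, h, hiB']
        have : y ∈ insert b {y'} := h2 ▸ (mem_insert_of_mem (mem_singleton_self y))
        rcases mem_insert.1 this with h3 | h3
        · exact absurd h3 hyb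
        · exact mem_singleton.1 h3
      simp [hx, hy]
  -- the incidence set
  set P : Finset (Finset V × V) := (𝒮 ×ˢ (Finset.univ : Finset V)).filter
    (fun p => p.2 ∉ p.1 ∧ insert p.2 p.1 ∈ H) with hPdef
  -- Step 2 : |𝒮| (n-1) ≤ |P|
  have hPlow : (𝒮.card : ℝ) * ((n:ℝ) - 1) ≤ (P.card : ℝ) := by
    have hmaps : ∀ p ∈ P, p.1 ∈ 𝒮 := by
      intro p hp
      simp only [hPdef, mem_filter, mem_product] at hp
      exact hp.1.1
    have hfib : ∀ S ∈ 𝒮, (P.filter fun p => p.1 = S).card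
        = (Finset.univ.filter (fun x => x ∉ S ∧ insert x S ∈ H)).card := by
      intro S hS
      apply card_bij (fun p _ => p.2)
      · intro p hp
        simp only [mem_filter, hPdef, mem_product] at hp ⊢
        obtain ⟨⟨_, ⟨h1, h2⟩⟩, h3⟩ := hp
        exact ⟨mem_univ _, h3 ▸ h1, h3 ▸ h2⟩
      · intro p hp q hq h
        simp only [mem_filter] at hp hq
        exact Prod.ext (hp.2.trans hq.2.symm) h
      · intro x hx
        simp only [mem_filter] at hx
        exact ⟨(S, x), by simp [hPdef, mem_filter, mem_product, hS, hx.2.1, hx.2.2], rfl⟩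
    have := card_eq_sum_card_fiberwise hmaps
    rw [this]
    push_cast
    calc (𝒮.card : ℝ) * ((n:ℝ) - 1) = ∑ _S ∈ 𝒮, ((n:ℝ) - 1) := by
          rw [Finset.sum_const, nsmul_eq_mul]
      _ ≤ ∑ S ∈ 𝒮, ((P.filter fun p => p.1 = S).card : ℝ) := by
          apply Finset.sum_le_sum
          intro S hS
          rw [hfib S hS]
          apply hdeg
          simp only [h𝒮def, mem_filter, mem_powersetCard] at hS
          exact hS.1.2
  -- Step 3 : |P| ≤ 2 * (t1.card + t2.card)
  set t1 : Finset (Finset V) := H.filter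
    (fun e => b ∈ e ∧ ((e.erase b) ∩ A).card = 2 ∧ ((e.erase b) ∩ B).card = 1) with ht1def
  set t2 : Finset (Finset V) := H.filter
    (fun e => b ∈ e ∧ ((e.erase b) ∩ A).card = 1 ∧ ((e.erase b) ∩ B).card = 2) with ht2def
  have hPup : P.card ≤ 2 * (t1 ∪ t2).card := by
    apply card_le_mul_card_image_of_maps_to (f := fun p => insert p.2 p.1)
    · rintro ⟨S, x⟩ hp
      simp only [hPdef, mem_filter, mem_product] at hp
      obtain ⟨⟨hS, _⟩, hxS, heH⟩ := hp
      simp only [h𝒮def, mem_filter, mem_powersetCard] at hS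
      obtain ⟨⟨_, hS3⟩, hbS, hSA, hSB⟩ := hS
      have hbe : b ∈ insert x S := mem_insert_of_mem hbS
      have hbB2 : b ∈ S ∩ B := mem_inter.2 ⟨hbS, hb⟩
      have hxAB : x ∈ A ∪ B := hU ▸ mem_univ x
      have herase : ∀ C : Finset V, b ∉ C → (insert x S).erase b ∩ C = insert x S ∩ C := by
        intro C hbC
        rw [erase_inter, erase_eq_of_notMem]
        exact fun h => hbC (mem_inter.1 h).2
      rcases mem_union.1 hxAB with hxA | hxB
      · apply mem_union_left
        simp only [ht1def, mem_filter]
        refine ⟨heH, hbe, ?_, ?_⟩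
        · rw [herase A hbA, insert_inter_of_mem hxA,
            card_insert_of_notMem (fun h => hxS (mem_inter.1 h).1), hSA]
        · rw [erase_inter, insert_inter_of_notMem
            (fun h => (Finset.disjoint_left.1 hAB) hxA h),
            card_erase_of_mem hbB2, hSB]
      · apply mem_union_right
        simp only [ht2def, mem_filter]
        refine ⟨heH, hbe, ?_, ?_⟩
        · rw [herase A hbA, insert_inter_of_notMem
            (fun h => (Finset.disjoint_left.1 hAB) h hxB), hSA]
        · rw [erase_inter, insert_inter_of_mem hxB,
            card_erase_of_mem (mem_insert_of_mem hbB2),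
            card_insert_of_notMem (fun h => hxS (mem_inter.1 h).1), hSB]
    · intro e he
      -- fiber bound
      have heH : e ∈ H := by
        rcases mem_union.1 he with h | h
        · exact (mem_filter.1 h).1
        · exact (mem_filter.1 h).1
      have hbe : b ∈ e := by
        rcases mem_union.1 he with h | h
        · exact (mem_filter.1 h).2.1
        · exact (mem_filter.1 h).2.1
      set X : Finset V := e.filter (fun x => x ≠ b ∧ ((e.erase x) ∩ A).card = 1) with hXdef
      have hsub : (P.filter fun p => insert p.2 p.1 = e).card ≤ X.card := by
        apply card_le_card_of_injOn (fun p => p.2)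
        · rintro ⟨S, x⟩ hp
          simp only [mem_coe, mem_filter, hPdef, mem_product] at hp
          obtain ⟨⟨⟨hS, _⟩, hxS, _⟩, hins⟩ := hp
          simp only [h𝒮def, mem_filter, mem_powersetCard] at hS
          obtain ⟨_, hbS, hSA, _⟩ := hS
          simp only [mem_coe, hXdef, mem_filter]
          refine ⟨hins ▸ mem_insert_self x S, fun h => hxS (h ▸ hbS), ?_⟩
          have : e.erase x = S := by rw [← hins, erase_insert hxS]
          rw [this, hSA]
        · rintro ⟨S, x⟩ hp ⟨S', x'⟩ hp' h
          simp only [coe_filter, Set.mem_setOf_eq, hPdef, mem_filter, mem_product] at hp hp'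
          simp only at h
          have h1 : S = e.erase x := by rw [← hp.2, erase_insert hp.1.2.1]
          have h2 : S' = e.erase x' := by rw [← hp'.2, erase_insert hp'.1.2.1]
          simp [h1, h2, h]
      refine hsub.trans ?_
      have hAe : (e.erase b) ∩ A = e ∩ A := by
        rw [erase_inter, erase_eq_of_notMem (fun h => hbA (mem_inter.1 h).2)]
      rcases mem_union.1 he with h | h
      · -- e ∈ t1 : X ⊆ e ∩ A, card 2
        have hcA : (e ∩ A).card = 2 := by rw [← hAe]; exact (mem_filter.1 h).2.2.1
        have : X ⊆ e ∩ A := by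
          intro x hx
          simp only [hXdef, mem_filter] at hx
          obtain ⟨hxe, _, hc⟩ := hx
          by_contra hxA
          have hxA' : x ∉ A := fun hh => hxA (mem_inter.2 ⟨hxe, hh⟩)
          rw [erase_inter, erase_eq_of_notMem (fun hh => hxA' (mem_inter.1 hh).2), hcA]
            at hc
          exact absurd hc (by norm_num)
        calc X.card ≤ (e ∩ A).card := card_le_card this
          _ = 2 := hcA
      · -- e ∈ t2 : X ⊆ (e ∩ B).erase b
        have hcA : (e ∩ A).card = 1 := by rw [← hAe]; exact (mem_filter.1 h).2.2.1
        have hcB : ((e ∩ B).erase b).card = 2 := by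
          rw [← erase_inter]; exact (mem_filter.1 h).2.2.2
        have : X ⊆ (e ∩ B).erase b := by
          intro x hx
          simp only [hXdef, mem_filter] at hx
          obtain ⟨hxe, hxb, hc⟩ := hx
          have hxA : x ∉ A := by
            intro hxA
            rw [erase_inter, card_erase_of_mem (mem_inter.2 ⟨hxe, hxA⟩), hcA] at hc
            exact absurd hc (by norm_num)
          have hxB : x ∈ B := by
            rcases mem_union.1 (hU ▸ mem_univ x) with h' | h'
            · exact absurd h' hxA
            · exact h'
          exact mem_erase.2 ⟨hxb, mem_inter.2 ⟨hxe, hxB⟩⟩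
        calc X.card ≤ ((e ∩ B).erase b).card := card_le_card this
          _ = 2 := hcB
  -- Step 4 : combine
  have hT : (t1 ∪ t2).card ≤ t1.card + t2.card := card_union_le _ _
  have hn1 : (1:ℝ) ≤ (n:ℝ) := by exact_mod_cast hn
  have h1 : (n:ℝ) * ((n:ℝ)-1) ≤ (𝒮.card : ℝ) := by
    have hcast : ((n * (n-1) : ℕ) : ℝ) = (n:ℝ) * ((n:ℝ)-1) := by
      rw [Nat.cast_mul, Nat.cast_sub hn, Nat.cast_one]
    rw [← hcast]; exact_mod_cast hScard
  have h2 : (P.card : ℝ) ≤ 2 * ((t1.card : ℝ) + (t2.card : ℝ)) := by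
    exact_mod_cast hPup.trans (Nat.mul_le_mul_left 2 hT)
  rw [linkCount_eq H H4 b A B 2 1, linkCount_eq H H4 b A B 1 2]
  calc (n:ℝ) * ((n:ℝ)-1) * ((n:ℝ)-1) ≤ (𝒮.card : ℝ) * ((n:ℝ)-1) := by
        apply mul_le_mul_of_nonneg_right h1 (by linarith)
    _ ≤ (P.card : ℝ) := hPlow
    _ ≤ 2 * ((t1.card : ℝ) + (t2.card : ℝ)) := h2

lemma split4 {α : Type} [DecidableEq α] (s : Finset (Finset α)) (a b : α) :
    s.card = (s.filter fun e => a ∈ e ∧ b ∈ e).card + (s.filter fun e => a ∈ e ∧ ¬ b ∈ e).card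
      + ((s.filter fun e => ¬ a ∈ e ∧ b ∈ e).card
        + (s.filter fun e => ¬ a ∈ e ∧ ¬ b ∈ e).card) := by
  have h1 := card_filter_add_card_filter_not (s := s) (p := fun e => a ∈ e)
  have h2 := card_filter_add_card_filter_not (s := s.filter fun e => a ∈ e)
    (p := fun e => b ∈ e)
  have h3 := card_filter_add_card_filter_not (s := s.filter fun e => ¬ a ∈ e)
    (p := fun e => b ∈ e)
  rw [filter_filter, filter_filter] at h2 h3
  omega

lemma swap_key {V : Type} [Fintype V] [DecidableEq V] {A B : Finset V}
    {H : Finset (Finset V)} {n : ℕ}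
    (hAB : Disjoint A B) (hU : A ∪ B = Finset.univ) (hA : A.card = n) (hB : B.card = n)
    (H4 : ∀ e ∈ H, e.card = 4)
    (hmin : ∀ A' B' : Finset V, Disjoint A' B' → A' ∪ B' = Finset.univ → A'.card = n →
      (H.filter (fun e => (e ∩ A).card = 2)).card ≤
        (H.filter (fun e => (e ∩ A').card = 2)).card)
    {a b : V} (ha : a ∈ A) (hb : b ∈ B) :
    linkCount H a A B 1 2 + linkCount H b A B 2 1 ≤
      linkCount H a A B 2 1 + linkCount H b A B 1 2
        + 2 * (H.filter fun e => a ∈ e ∧ b ∈ e).card := by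
  classical
  have hbA : b ∉ A := fun h => (Finset.disjoint_left.1 hAB) h hb
  have haB : a ∉ B := fun h => (Finset.disjoint_left.1 hAB) ha h
  have hab : a ≠ b := fun h => haB (h ▸ hb)
  set A' : Finset V := insert b (A.erase a) with hA'def
  set B' : Finset V := insert a (B.erase b) with hB'def
  have hdisj' : Disjoint A' B' := by
    rw [Finset.disjoint_left]
    intro x hx hx'
    simp only [hA'def, hB'def, mem_insert, mem_erase] at hx hx'
    rcases hx with rfl | ⟨hxa, hxA⟩
    · rcases hx' with h | ⟨h, hxB⟩
      · exact hab h.symm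
      · exact h rfl
    · rcases hx' with rfl | ⟨_, hxB⟩
      · exact hxa rfl
      · exact (Finset.disjoint_left.1 hAB) hxA hxB
  have hunion' : A' ∪ B' = Finset.univ := by
    apply eq_univ_of_forall
    intro x
    simp only [hA'def, hB'def, mem_union, mem_insert, mem_erase]
    by_cases hxa : x = a
    · right; left; exact hxa
    by_cases hxb : x = b
    · left; left; exact hxb
    rcases mem_union.1 (hU ▸ mem_univ x) with h | h
    · left; right; exact ⟨hxa, h⟩
    · right; right; exact ⟨hxb, h⟩
  have hn1 : 1 ≤ n := by rw [← hA]; exact card_pos.2 ⟨a, ha⟩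
  have hcardA' : A'.card = n := by
    rw [hA'def, card_insert_of_notMem (fun h => hbA (mem_erase.1 h).2),
      card_erase_of_mem ha, hA]
    omega
  have hM := hmin A' B' hdisj' hunion' hcardA'
  -- pointwise intersection cardinalities
  have hiA' : ∀ e : Finset V, b ∈ e → e ∩ A' = insert b ((A ∩ e).erase a) := by
    intro e hbe
    rw [inter_comm, hA'def, insert_inter_of_mem hbe, erase_inter]
  have hiA'' : ∀ e : Finset V, b ∉ e → e ∩ A' = (A ∩ e).erase a := by
    intro e hbe
    rw [inter_comm, hA'def, insert_inter_of_notMem hbe, erase_inter]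
  have h1c : ∀ e : Finset V, a ∈ e → b ∉ e → (e ∩ A').card + 1 = (e ∩ A).card := by
    intro e hae hbe
    rw [hiA'' e hbe, inter_comm e A]
    exact card_erase_add_one (mem_inter.2 ⟨ha, hae⟩)
  have h2c : ∀ e : Finset V, a ∉ e → b ∈ e → (e ∩ A').card = (e ∩ A).card + 1 := by
    intro e hae hbe
    rw [hiA' e hbe, erase_eq_of_notMem (fun h => hae (mem_inter.1 h).2), inter_comm e A]
    exact card_insert_of_notMem (fun h => hbA (mem_inter.1 h).1)
  have h3c : ∀ e : Finset V, a ∈ e → b ∈ e → (e ∩ A').card = (e ∩ A).card := by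
    intro e hae hbe
    rw [hiA' e hbe, card_insert_of_notMem (fun h => hbA (mem_inter.1 (mem_of_mem_erase h)).1),
      inter_comm e A]
    exact card_erase_add_one (mem_inter.2 ⟨ha, hae⟩)
  have h4c : ∀ e : Finset V, a ∉ e → b ∉ e → (e ∩ A').card = (e ∩ A).card := by
    intro e hae hbe
    rw [hiA'' e hbe, erase_eq_of_notMem (fun h => hae (mem_inter.1 h).2), inter_comm e A]
  -- class-by-class filters
  have hEq3 : H.filter (fun e => (e ∩ A').card = 2 ∧ (a ∈ e ∧ b ∈ e))
      = H.filter (fun e => (e ∩ A).card = 2 ∧ (a ∈ e ∧ b ∈ e)) := by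
    apply filter_congr
    intro e _
    constructor
    · rintro ⟨h1, h2⟩; exact ⟨by rw [← h3c e h2.1 h2.2]; exact h1, h2⟩
    · rintro ⟨h1, h2⟩; exact ⟨by rw [h3c e h2.1 h2.2]; exact h1, h2⟩
  have hEq4 : H.filter (fun e => (e ∩ A').card = 2 ∧ (¬ a ∈ e ∧ ¬ b ∈ e))
      = H.filter (fun e => (e ∩ A).card = 2 ∧ (¬ a ∈ e ∧ ¬ b ∈ e)) := by
    apply filter_congr
    intro e _
    constructor
    · rintro ⟨h1, h2⟩; exact ⟨by rw [← h4c e h2.1 h2.2]; exact h1, h2⟩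
    · rintro ⟨h1, h2⟩; exact ⟨by rw [h4c e h2.1 h2.2]; exact h1, h2⟩
  have hEq1 : H.filter (fun e => (e ∩ A').card = 2 ∧ (a ∈ e ∧ ¬ b ∈ e))
      = H.filter (fun e => (e ∩ A).card = 3 ∧ (a ∈ e ∧ ¬ b ∈ e)) := by
    apply filter_congr
    intro e _
    constructor
    · rintro ⟨h1, h2⟩; have := h1c e h2.1 h2.2; exact ⟨by omega, h2⟩
    · rintro ⟨h1, h2⟩; have := h1c e h2.1 h2.2; exact ⟨by omega, h2⟩
  have hEq2 : H.filter (fun e => (e ∩ A').card = 2 ∧ (¬ a ∈ e ∧ b ∈ e))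
      = H.filter (fun e => (e ∩ A).card = 1 ∧ (¬ a ∈ e ∧ b ∈ e)) := by
    apply filter_congr
    intro e _
    constructor
    · rintro ⟨h1, h2⟩; have := h2c e h2.1 h2.2; exact ⟨by omega, h2⟩
    · rintro ⟨h1, h2⟩; have := h2c e h2.1 h2.2; exact ⟨by omega, h2⟩
  have hsA := split4 (H.filter (fun e => (e ∩ A).card = 2)) a b
  have hsA' := split4 (H.filter (fun e => (e ∩ A').card = 2)) a b
  rw [filter_filter, filter_filter, filter_filter, filter_filter] at hsA hsA'
  rw [hEq1, hEq2, hEq3, hEq4] at hsA'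
  -- the reduced minimality inequality
  have hred : (H.filter (fun e => (e ∩ A).card = 2 ∧ (a ∈ e ∧ ¬ b ∈ e))).card
      + (H.filter (fun e => (e ∩ A).card = 2 ∧ (¬ a ∈ e ∧ b ∈ e))).card
      ≤ (H.filter (fun e => (e ∩ A).card = 3 ∧ (a ∈ e ∧ ¬ b ∈ e))).card
      + (H.filter (fun e => (e ∩ A).card = 1 ∧ (¬ a ∈ e ∧ b ∈ e))).card := by
    omega
  -- link counts vs classes
  rw [linkCount_eq H H4 a A B 1 2, linkCount_eq H H4 a A B 2 1,
    linkCount_eq H H4 b A B 2 1, linkCount_eq H H4 b A B 1 2]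
  set D : Finset (Finset V) := H.filter fun e => a ∈ e ∧ b ∈ e with hDdef
  have heA : ∀ e : Finset V, (e.erase a) ∩ A = (e ∩ A).erase a := fun e => by
    rw [erase_inter]
  have heB : ∀ e : Finset V, (e.erase a) ∩ B = e ∩ B := fun e => by
    rw [erase_inter, erase_eq_of_notMem (fun h => haB (mem_inter.1 h).2)]
  have hfA : ∀ e : Finset V, (e.erase b) ∩ A = e ∩ A := fun e => by
    rw [erase_inter, erase_eq_of_notMem (fun h => hbA (mem_inter.1 h).2)]
  have hfB : ∀ e : Finset V, (e.erase b) ∩ B = (e ∩ B).erase b := fun e => by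
    rw [erase_inter]
  -- (i)
  have hi : (H.filter fun e => a ∈ e ∧ ((e.erase a) ∩ A).card = 1 ∧ ((e.erase a) ∩ B).card = 2).card
      ≤ (H.filter (fun e => (e ∩ A).card = 2 ∧ (a ∈ e ∧ ¬ b ∈ e))).card + D.card := by
    refine le_trans (card_le_card ?_) (card_union_le _ _)
    intro e he
    simp only [mem_filter] at he
    obtain ⟨heH, hae, hA1, hB2⟩ := he
    by_cases hbe : b ∈ e
    · exact mem_union_right _ (mem_filter.2 ⟨heH, hae, hbe⟩)
    · apply mem_union_left
      refine mem_filter.2 ⟨heH, ?_, hae, hbe⟩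
      rw [heA] at hA1
      have := card_erase_add_one (mem_inter.2 ⟨hae, ha⟩)
      omega
  -- (ii)
  have hii : (H.filter fun e => b ∈ e ∧ ((e.erase b) ∩ A).card = 2 ∧ ((e.erase b) ∩ B).card = 1).card
      ≤ (H.filter (fun e => (e ∩ A).card = 2 ∧ (¬ a ∈ e ∧ b ∈ e))).card + D.card := by
    refine le_trans (card_le_card ?_) (card_union_le _ _)
    intro e he
    simp only [mem_filter] at he
    obtain ⟨heH, hbe, hA2, hB1⟩ := he
    by_cases hae : a ∈ e
    · exact mem_union_right _ (mem_filter.2 ⟨heH, hae, hbe⟩)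
    · apply mem_union_left
      refine mem_filter.2 ⟨heH, ?_, hae, hbe⟩
      rw [hfA] at hA2
      exact hA2
  -- (iii)
  have hiii : (H.filter (fun e => (e ∩ A).card = 3 ∧ (a ∈ e ∧ ¬ b ∈ e))).card
      ≤ (H.filter fun e => a ∈ e ∧ ((e.erase a) ∩ A).card = 2 ∧ ((e.erase a) ∩ B).card = 1).card := by
    apply card_le_card
    intro e he
    simp only [mem_filter] at he ⊢
    obtain ⟨heH, hA3, hae, hbe⟩ := he
    have hsum := interAB_card hAB hU e
    rw [H4 e heH] at hsum
    refine ⟨heH, hae, ?_, ?_⟩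
    · rw [heA]
      have := card_erase_add_one (mem_inter.2 ⟨hae, ha⟩)
      omega
    · rw [heB]; omega
  -- (iv)
  have hiv : (H.filter (fun e => (e ∩ A).card = 1 ∧ (¬ a ∈ e ∧ b ∈ e))).card
      ≤ (H.filter fun e => b ∈ e ∧ ((e.erase b) ∩ A).card = 1 ∧ ((e.erase b) ∩ B).card = 2).card := by
    apply card_le_card
    intro e he
    simp only [mem_filter] at he ⊢
    obtain ⟨heH, hA1, hae, hbe⟩ := he
    have hsum := interAB_card hAB hU e
    rw [H4 e heH] at hsum
    refine ⟨heH, hbe, ?_, ?_⟩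
    · rw [hfA]; exact hA1
    · rw [hfB]
      have := card_erase_add_one (mem_inter.2 ⟨hbe, hb⟩)
      omega
  omega

theorem stmt_16 :
    ∀ ε : ℝ, 0 < ε → ∃ n₀ : ℕ, ∀ n : ℕ, n₀ ≤ n →
    ∀ (V : Type) [Fintype V] [DecidableEq V],
    ∀ (A B : Finset V) (H : Finset (Finset V)),
      Disjoint A B → A ∪ B = Finset.univ → A.card = n → B.card = n →
      (∀ e ∈ H, e.card = 4) →
      (∀ S : Finset V, S.card = 3 →
        (n : ℝ) - 1 ≤ ((Finset.univ.filter (fun x => x ∉ S ∧ insert x S ∈ H)).card : ℝ)) →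
      (∀ A' B' : Finset V, Disjoint A' B' → A' ∪ B' = Finset.univ → A'.card = n →
        (H.filter (fun e => (e ∩ A).card = 2)).card ≤
          (H.filter (fun e => (e ∩ A').card = 2)).card) →
      (∃ b ∈ B, (linkCount H b A B 1 2 : ℝ) ≤ (ε / 2) * n ^ 3) →
      ∀ a ∈ A, (linkCount H a A B 1 2 : ℝ) ≤ (3/2) * ε * n ^ 3 := by
  intro ε hε
  refine ⟨⌈10 / ε⌉₊ + 1, ?_⟩
  intro n hn V _ _ A B H hAB hU hA hB H4 hdeg hmin hex a ha
  obtain ⟨b, hb, hbsmall⟩ := hex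
  have hn1 : 1 ≤ n := le_trans (Nat.le_add_left 1 _) hn
  have hn1R : (1:ℝ) ≤ (n:ℝ) := by exact_mod_cast hn1
  have hεn : 10 ≤ ε * n := by
    have h1 : (10 / ε : ℝ) ≤ (⌈10 / ε⌉₊ : ℕ) := Nat.le_ceil _
    have h2 : ((⌈10 / ε⌉₊ : ℕ) : ℝ) ≤ (n : ℝ) := by
      exact_mod_cast le_trans (Nat.le_add_right _ 1) hn
    have h3 : (10 / ε : ℝ) ≤ (n : ℝ) := le_trans h1 h2
    rw [div_le_iff₀ hε] at h3
    linarith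
  have hab : a ≠ b := fun h => (Finset.disjoint_left.1 hAB) ha (h ▸ hb)
  -- the key swap inequality
  have hkeyN := swap_key hAB hU hA hB H4 hmin ha hb
  -- D bound
  have hVcard : Fintype.card V = 2 * n := by
    rw [← Finset.card_univ, ← hU, card_union_of_disjoint hAB, hA, hB]; omega
  have hDN := D_upper H H4 a b hab
  rw [hVcard] at hDN
  have hD : ((H.filter fun e => a ∈ e ∧ b ∈ e).card : ℝ) ≤ 2 * (n:ℝ)^2 := by
    calc ((H.filter fun e => a ∈ e ∧ b ∈ e).card : ℝ) ≤ ((2*n).choose 2 : ℕ) := by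
          exact_mod_cast hDN
      _ = (2*(n:ℝ)) * (2*(n:ℝ) - 1) / 2 := by
          rw [Nat.cast_choose_two]; push_cast; ring
      _ ≤ 2 * (n:ℝ)^2 := by nlinarith
  -- crude upper bound for l_a^{AAB}
  have hupN := crude_upper H a A B hU
  rw [hA, hB] at hupN
  have hup : (linkCount H a A B 2 1 : ℝ) ≤ ((n:ℝ)^3 - (n:ℝ)^2) / 2 := by
    calc (linkCount H a A B 2 1 : ℝ) ≤ ((n.choose 2 * n : ℕ) : ℝ) := by exact_mod_cast hupN
      _ = (n:ℝ) * ((n:ℝ) - 1) / 2 * (n:ℝ) := by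
          rw [Nat.cast_mul, Nat.cast_choose_two]
      _ = ((n:ℝ)^3 - (n:ℝ)^2) / 2 := by ring
  -- min-degree lower bound for b
  have hdegb := deg_lower hAB hU hA hB H4 hdeg hn1 hb
  have hkey : (linkCount H a A B 1 2 : ℝ) + (linkCount H b A B 2 1 : ℝ) ≤
      (linkCount H a A B 2 1 : ℝ) + (linkCount H b A B 1 2 : ℝ)
        + 2 * ((H.filter fun e => a ∈ e ∧ b ∈ e).card : ℝ) := by
    exact_mod_cast hkeyN
  have hexp : (n:ℝ) * ((n:ℝ) - 1) * ((n:ℝ) - 1) = (n:ℝ)^3 - 2*(n:ℝ)^2 + (n:ℝ) := by ring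
  rw [hexp] at hdegb
  have h5 : 10 * (n:ℝ)^2 ≤ ε * (n:ℝ)^3 := by nlinarith [sq_nonneg (n:ℝ)]
  linarith
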